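/- Let Σ_out be a finite set, r ≥ 1, and consider an LCL on directed paths of checking radius r. Let G be a directed path, P a subpath of G, and P' a path with Type(P') = Type(P) (with respect to the extendibility-based type equivalence). If L is a complete output labeling of G that is locally consistent at all positions of P, then the graph G' obtained by replacing P with P' in G admits a complete output labeling L' such that (i) L' agrees with L on all positions of G outside P (under the natural correspondence), (ii) L' is locally consistent at every position outside P where L was locally consistent, and (iii) L' is locally consistent at all positions of P'. -/

import Mathlib

variable {Sin Sout : Type*}

/-- Position in the path `P` of the `i`-th boundary node. -/
def posIdx (r : ℕ) (P : List Sin) (i : Fin (4 * r)) : ℕ :=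
  if (i : ℕ) < 2 * r then (i : ℕ) else P.length - 4 * r + (i : ℕ)

/-- Local consistency at position `j` (window clipped to the path). -/
def consistentAt (r : ℕ) (ok : List (Sin × Sout) → Prop)
    (P : List Sin) (out : List Sout) (j : ℕ) : Prop :=
  ok (((P.zip out).drop (j - r)).take (j + r + 1 - (j - r)))

/-- A boundary output labeling is extendible. -/
def Extendible [Inhabited Sout] (r : ℕ) (ok : List (Sin × Sout) → Prop)
    (P : List Sin) (L : Fin (4 * r) → Sout) : Prop :=
  ∃ out : List Sout, out.length = P.length ∧
    (∀ i : Fin (4 * r), out.getD (posIdx r P i) default = L i) ∧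
    ∀ j : ℕ, r ≤ j → j + r < P.length → consistentAt r ok P out j

/-- The type equivalence relation on input-labeled directed paths. -/
def pathEquiv [Inhabited Sout] (r : ℕ) (ok : List (Sin × Sout) → Prop)
    (P P' : List Sin) : Prop :=
  if 4 * r ≤ P.length ∧ 4 * r ≤ P'.length then
    P.take (2 * r) = P'.take (2 * r) ∧
    P.drop (P.length - 2 * r) = P'.drop (P'.length - 2 * r) ∧
    ∀ L : Fin (4 * r) → Sout, Extendible r ok P L ↔ Extendible r ok P' L
  else P = P'

private lemma myTakeZip {α β : Type*} :
    ∀ (l : List α) (l' : List β) (n : ℕ),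
      (l.zip l').take n = (l.take n).zip (l'.take n)
  | [], _, _ => by simp
  | _ :: _, [], _ => by simp
  | _ :: _, _ :: _, 0 => rfl
  | a :: l, b :: l', n + 1 => by
      simp [List.zip_cons_cons, myTakeZip l l' n]

private lemma myDropZip {α β : Type*} :
    ∀ (l : List α) (l' : List β) (n : ℕ),
      (l.zip l').drop n = (l.drop n).zip (l'.drop n)
  | [], _, _ => by simp
  | _ :: _, [], _ => by simp
  | _ :: _, _ :: _, 0 => rfl
  | a :: l, b :: l', n + 1 => by
      simp [List.zip_cons_cons, myDropZip l l' n]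

private lemma winPre {α : Type*} {l l' : List α} {n : ℕ}
    (h : l.take n = l'.take n) {a b : ℕ} (hab : a + b ≤ n) :
    (l.drop a).take b = (l'.drop a).take b := by
  rw [List.take_drop, List.take_drop]
  have h2 : l.take (a + b) = l'.take (a + b) := by
    have := congrArg (List.take (a + b)) h
    simpa [List.take_take, Nat.min_eq_left hab] using this
  rw [h2]

private lemma winSuf {α : Type*} {l l' : List α} {s s' : ℕ}
    (h : l.drop s = l'.drop s') {d b : ℕ} :
    (l.drop (s + d)).take b = (l'.drop (s' + d)).take b := by
  rw [← List.drop_drop (i := d) (j := s) (l := l), ← List.drop_drop (i := d) (j := s') (l := l'), h]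

private lemma winLeft {α : Type*} (X Y : List α) {a b : ℕ}
    (hab : a + b ≤ X.length) :
    ((X ++ Y).drop a).take b = (X.drop a).take b :=
  winPre (by rw [List.take_left, List.take_length]) hab

/-- Replacing a subpath `P` of `G = A ++ P ++ B` by a path `P'` of the same type:
any complete labeling `L` of `G` locally consistent on `P` yields a labeling `L'` of
`G' = A ++ P' ++ B` agreeing with `L` outside `P`, preserving local consistency outside
`P`, and locally consistent at all positions of `P'`. -/
theorem stmt14 [Inhabited Sin] [Inhabited Sout] (r : ℕ) (hr : 0 < r)
    (ok : List (Sin × Sout) → Prop)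
    (A B P P' : List Sin) (hEq : pathEquiv r ok P P')
    (L : List Sout) (hLlen : L.length = (A ++ P ++ B).length)
    (hP : ∀ j, A.length ≤ j → j < A.length + P.length →
      consistentAt r ok (A ++ P ++ B) L j) :
    ∃ L' : List Sout, L'.length = (A ++ P' ++ B).length ∧
      (∀ j < A.length, L'.getD j default = L.getD j default) ∧
      (∀ j < B.length,
        L'.getD (A.length + P'.length + j) default
          = L.getD (A.length + P.length + j) default) ∧
      (∀ j < A.length, consistentAt r ok (A ++ P ++ B) L j →
        consistentAt r ok (A ++ P' ++ B) L' j) ∧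
      (∀ j < B.length,
        consistentAt r ok (A ++ P ++ B) L (A.length + P.length + j) →
        consistentAt r ok (A ++ P' ++ B) L' (A.length + P'.length + j)) ∧
      (∀ j, A.length ≤ j → j < A.length + P'.length →
        consistentAt r ok (A ++ P' ++ B) L' j) := by
  rw [pathEquiv] at hEq
  by_cases hc : 4 * r ≤ P.length ∧ 4 * r ≤ P'.length
  · rw [if_pos hc] at hEq
    obtain ⟨hcP, hcP'⟩ := hc
    obtain ⟨h1, h2, h3⟩ := hEq
    simp only [List.length_append] at hLlen
    set n := A.length with hn
    set p := P.length with hp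
    set p' := P'.length with hp'
    set b := B.length with hb
    set out : List Sout := (L.drop n).take p with hout
    have hout_len : out.length = p := by
      simp only [hout, List.length_take, List.length_drop]
      omega
    have htn : (L.take n).length = n := by
      simp only [List.length_take]; omega
    have hdnp : (L.drop (n + p)).length = b := by
      simp only [List.length_drop]; omega
    have hLdec : L = L.take n ++ (out ++ L.drop (n + p)) := by
      rw [hout, ← List.drop_drop (i := p) (j := n) (l := L), List.take_append_drop,
        List.take_append_drop]
    have hzipL : (A ++ P ++ B).zip L
        = A.zip (L.take n) ++ (P.zip out ++ B.zip (L.drop (n + p))) := by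
      conv_lhs => rw [List.append_assoc, hLdec]
      rw [List.zip_append htn.symm, List.zip_append hout_len.symm]
    have hzlen1 : (A.zip (L.take n)).length = n := by
      rw [List.length_zip, htn]; omega
    have hzlenP : (P.zip out).length = p := by
      rw [List.length_zip, hout_len]; omega
    have hExtP : Extendible r ok P (fun i => out.getD (posIdx r P i) default) := by
      refine ⟨out, hout_len, fun i => rfl, fun j hj hjp => ?_⟩
      have hglob := hP (n + j) (by omega) (by omega)
      unfold consistentAt at hglob ⊢
      rw [hzipL] at hglob
      have e1 : n + j - r = (A.zip (L.take n)).length + (j - r) := by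
        rw [hzlen1]; omega
      have e2 : n + j + r + 1 - (n + j - r) = 2 * r + 1 := by omega
      have e3 : j + r + 1 - (j - r) = 2 * r + 1 := by omega
      rw [e2, e1, List.drop_length_add_append,
        winLeft (P.zip out) _ (by rw [hzlenP]; omega)] at hglob
      rw [e3]
      exact hglob
    obtain ⟨out', hlen', hbd', hcons'⟩ := (h3 _).mp hExtP
    clear hout hLdec
    clear_value out
    have hzlenP' : (P'.zip out').length = p' := by
      rw [List.length_zip, hlen']; omega
    have htake : out.take (2 * r) = out'.take (2 * r) := by
      apply List.ext_getElem
      · simp only [List.length_take, hout_len, hlen']; omega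
      · intro k hk1 hk2
        have hk : k < 2 * r := by
          simp only [List.length_take] at hk1; omega
        rw [List.getElem_take, List.getElem_take]
        have hbk := hbd' ⟨k, by omega⟩
        simp only [posIdx, hk, if_pos] at hbk
        rw [List.getD_eq_getElem out' default (show k < out'.length by omega),
          List.getD_eq_getElem out default (show k < out.length by omega)]
          at hbk
        exact hbk.symm
    have hdrop : out.drop (p - 2 * r) = out'.drop (p' - 2 * r) := by
      apply List.ext_getElem
      · simp only [List.length_drop, hout_len, hlen']; omega
      · intro k hk1 hk2
        have hk : k < 2 * r := by
          simp only [List.length_drop, hout_len] at hk1; omega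
        rw [List.getElem_drop, List.getElem_drop]
        have hbk := hbd' ⟨2 * r + k, by omega⟩
        simp only [posIdx] at hbk
        rw [if_neg (by omega : ¬ (2 * r + k < 2 * r)),
          if_neg (by omega : ¬ (2 * r + k < 2 * r))] at hbk
        have eP : p - 4 * r + (2 * r + k) = p - 2 * r + k := by omega
        have eP' : p' - 4 * r + (2 * r + k) = p' - 2 * r + k := by omega
        rw [eP', eP] at hbk
        rw [List.getD_eq_getElem out' default
            (show p' - 2 * r + k < out'.length by omega),
          List.getD_eq_getElem out default
            (show p - 2 * r + k < out.length by omega)] at hbk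
        exact hbk.symm
    set L' : List Sout := L.take n ++ (out' ++ L.drop (n + p)) with hL'
    have hL'len : L'.length = n + (p' + b) := by
      simp only [hL', List.length_append, htn, hlen', hdnp]; omega
    have hzipL' : (A ++ P' ++ B).zip L'
        = A.zip (L.take n) ++ (P'.zip out' ++ B.zip (L.drop (n + p))) := by
      conv_lhs => rw [List.append_assoc, hL']
      rw [List.zip_append htn.symm, List.zip_append hlen'.symm]
    clear_value L'
    have hEpre : ((A ++ P ++ B).zip L).take (n + 2 * r)
        = ((A ++ P' ++ B).zip L').take (n + 2 * r) := by
      rw [hzipL, hzipL']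
      rw [show n + 2 * r = (A.zip (L.take n)).length + 2 * r by rw [hzlen1]]
      rw [List.take_length_add_append, List.take_length_add_append]
      congr 1
      rw [List.take_append_of_le_length (by rw [hzlenP]; omega),
        List.take_append_of_le_length (by rw [hzlenP']; omega)]
      rw [myTakeZip, myTakeZip, h1, htake]
    have hEsuf : ((A ++ P ++ B).zip L).drop (n + p - 2 * r)
        = ((A ++ P' ++ B).zip L').drop (n + p' - 2 * r) := by
      rw [hzipL, hzipL']
      rw [show n + p - 2 * r = (A.zip (L.take n)).length + (p - 2 * r) by
        rw [hzlen1]; omega]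
      rw [show n + p' - 2 * r = (A.zip (L.take n)).length + (p' - 2 * r) by
        rw [hzlen1]; omega]
      rw [List.drop_length_add_append, List.drop_length_add_append]
      rw [List.drop_append_of_le_length (by rw [hzlenP]; omega),
        List.drop_append_of_le_length (by rw [hzlenP']; omega)]
      rw [myDropZip, myDropZip, h2, hdrop]
    refine ⟨L', by simp only [hL'len, List.length_append]; omega, ?_, ?_, ?_, ?_, ?_⟩
    · -- agreement on A
      intro j hj
      rw [hL', List.getD_append _ _ _ j (by rw [htn]; exact hj),
        List.getD_eq_getElem?_getD, List.getElem?_take, if_pos hj,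
        ← List.getD_eq_getElem?_getD]
    · -- agreement on B
      intro j hj
      rw [hL', List.getD_append_right _ _ _ _ (by rw [htn]; omega),
        List.getD_append_right _ _ _ _ (by rw [htn, hlen']; omega),
        List.getD_eq_getElem?_getD, List.getElem?_drop,
        List.getD_eq_getElem?_getD (l := L) (i := n + p + j)]
      have eidx : n + p + (n + p' + j - (L.take n).length - out'.length)
          = n + p + j := by rw [htn, hlen']; omega
      rw [eidx]
    · -- consistency preserved on A
      intro j hj hcons
      unfold consistentAt at hcons ⊢
      rw [← winPre hEpre (show (j - r) + (j + r + 1 - (j - r)) ≤ n + 2 * r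
        by omega)]
      exact hcons
    · -- consistency preserved on B
      intro j hj hcons
      unfold consistentAt at hcons ⊢
      have e1 : n + p + j + r + 1 - (n + p + j - r) = 2 * r + 1 := by omega
      have e2 : n + p' + j + r + 1 - (n + p' + j - r) = 2 * r + 1 := by omega
      have e3 : n + p + j - r = (n + p - 2 * r) + (j + r) := by omega
      have e4 : n + p' + j - r = (n + p' - 2 * r) + (j + r) := by omega
      rw [e1, e3] at hcons
      rw [e2, e4, ← winSuf hEsuf]
      exact hcons
    · -- consistency on P'
      intro j hjl hjr
      unfold consistentAt
      by_cases hcase1 : j < n + r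
      · have hold := hP j hjl (by omega)
        unfold consistentAt at hold
        rw [← winPre hEpre (show (j - r) + (j + r + 1 - (j - r)) ≤ n + 2 * r
          by omega)]
        exact hold
      · by_cases hcase2 : n + p' ≤ j + r
        · have hold := hP (j + p - p') (by omega) (by omega)
          unfold consistentAt at hold
          have e1 : (j + p - p') + r + 1 - ((j + p - p') - r) = 2 * r + 1 := by
            omega
          have e2 : j + r + 1 - (j - r) = 2 * r + 1 := by omega
          have e3 : (j + p - p') - r = (n + p - 2 * r) + (j + r - (n + p')) := by
            omega
          have e4 : j - r = (n + p' - 2 * r) + (j + r - (n + p')) := by omega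
          rw [e1, e3] at hold
          rw [e2, e4, ← winSuf hEsuf]
          exact hold
        · have hloc := hcons' (j - n) (by omega) (by omega)
          unfold consistentAt at hloc
          have e1 : (j - n) + r + 1 - ((j - n) - r) = 2 * r + 1 := by omega
          have e2 : j + r + 1 - (j - r) = 2 * r + 1 := by omega
          rw [e1] at hloc
          rw [e2, hzipL']
          rw [show j - r = (A.zip (L.take n)).length + ((j - n) - r) by
            rw [hzlen1]; omega]
          rw [List.drop_length_add_append,
            winLeft (P'.zip out') _ (by rw [hzlenP']; omega)]
          exact hloc
  · rw [if_neg hc] at hEq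
    subst hEq
    exact ⟨L, hLlen, fun j _ => rfl, fun j _ => rfl, fun j _ h => h,
      fun j _ h => h, hP⟩
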